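/- Let d ≥ 1, let A be a symmetric d×d real matrix with maximum column norm ‖A‖_{1→2} ≤ 1, and let η > 0, ε ∈ ℝ. Then for every integer T ≥ 1, ‖diag(E[B_T])‖ ≤ 2η ‖E[B_{T−1}]‖_{1→2} + (1 + η² d²) ‖diag(E[B_{T−1}])‖. -/

import Mathlib

open Matrix BigOperators

/-- The rank-one sample matrix `A_{(i,j)} = d² A_{ij} e_i e_jᵀ`. -/
noncomputable def sampleMat {d : ℕ} (A : Matrix (Fin d) (Fin d) ℝ) (p : Fin d × Fin d) :
    Matrix (Fin d) (Fin d) ℝ :=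
  ((d : ℝ) ^ 2 * A p.1 p.2) • Matrix.single p.1 p.2 1

/-- `P_T(ω) = (I + η A_{(i_T,j_T)}) ⋯ (I + η A_{(i_1,j_1)})`. -/
noncomputable def prodMat {d : ℕ} (A : Matrix (Fin d) (Fin d) ℝ) (η : ℝ) :
    (T : ℕ) → (Fin T → Fin d × Fin d) → Matrix (Fin d) (Fin d) ℝ
  | 0, _ => 1
  | (T + 1), ω => (1 + η • sampleMat A (ω (Fin.last T))) * prodMat A η T (fun t => ω t.castSucc)

/-- `E[B_T]`: the average of `P_T(ω)ᵀ ((1-ε)I - A) P_T(ω)` over all sequences `ω`. -/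
noncomputable def EB {d : ℕ} (A : Matrix (Fin d) (Fin d) ℝ) (η ε : ℝ) (T : ℕ) :
    Matrix (Fin d) (Fin d) ℝ :=
  (Fintype.card (Fin T → Fin d × Fin d) : ℝ)⁻¹ •
    ∑ ω : Fin T → Fin d × Fin d,
      (prodMat A η T ω)ᵀ * ((1 - ε) • (1 : Matrix (Fin d) (Fin d) ℝ) - A) * prodMat A η T ω

/-- The operator (spectral) norm of a matrix, as a map on Euclidean space. -/
noncomputable def opNorm {d : ℕ} (M : Matrix (Fin d) (Fin d) ℝ) : ℝ :=
  ‖Matrix.toEuclideanCLM (𝕜 := ℝ) M‖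

/-- The maximum Euclidean column norm `‖M‖_{1→2} = max_j ‖M e_j‖₂`. -/
noncomputable def colNorm {d : ℕ} (M : Matrix (Fin d) (Fin d) ℝ) : ℝ :=
  ⨆ j : Fin d, Real.sqrt (∑ i : Fin d, (M i j) ^ 2)

/-- `diag(M)`: the diagonal matrix with the same diagonal as `M`. -/
def diagPart {d : ℕ} (M : Matrix (Fin d) (Fin d) ℝ) : Matrix (Fin d) (Fin d) ℝ :=
  Matrix.diagonal M.diag

/-! ### Auxiliary lemmas -/

lemma stdBasisMatrix_transpose' {d : ℕ} (i k : Fin d) :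
    (Matrix.single i k (1 : ℝ))ᵀ = Matrix.single k i 1 := by
  ext a b
  simp [Matrix.single, Matrix.transpose_apply, and_comm]

/-- Pulling the first factor out of the product on the right. -/
lemma prodMat_cons {d : ℕ} (A : Matrix (Fin d) (Fin d) ℝ) (η : ℝ) :
    ∀ (T : ℕ) (ω : Fin (T + 1) → Fin d × Fin d),
      prodMat A η (T + 1) ω =
        prodMat A η T (fun t => ω t.succ) * (1 + η • sampleMat A (ω 0))
  | 0, ω => by
    simp [prodMat, Fin.last]
  | (T + 1), ω => by
    show (1 + η • sampleMat A (ω (Fin.last (T + 1)))) *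
        prodMat A η (T + 1) (fun t => ω t.castSucc) = _
    rw [prodMat_cons A η T (fun t => ω t.castSucc)]
    show (1 + η • sampleMat A (ω (Fin.last (T + 1)))) *
        (prodMat A η T (fun t => ω (t.succ.castSucc)) * (1 + η • sampleMat A (ω 0))) = _
    show _ = (1 + η • sampleMat A (ω (Fin.last T).succ)) *
        prodMat A η T (fun t => ω (t.castSucc.succ)) * (1 + η • sampleMat A (ω 0))
    rw [Fin.succ_last, mul_assoc]
    have : (fun t : Fin T => ω (t.succ.castSucc)) = fun t => ω (t.castSucc.succ) := by
      funext t; rw [Fin.succ_castSucc]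
    rw [this]

lemma EB_isSymm {d : ℕ} (A : Matrix (Fin d) (Fin d) ℝ) (hsymm : A.IsSymm) (η ε : ℝ) (T : ℕ) :
    (EB A η ε T).IsSymm := by
  unfold EB Matrix.IsSymm
  rw [Matrix.transpose_smul, Matrix.transpose_sum]
  congr 1
  refine Finset.sum_congr rfl fun ω _ => ?_
  rw [Matrix.transpose_mul, Matrix.transpose_mul, Matrix.transpose_transpose, mul_assoc]
  congr 1
  rw [Matrix.transpose_sub, Matrix.transpose_smul, Matrix.transpose_one, hsymm]

/-- The one-step recursion for `EB` (conditioning on the first sample). -/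
lemma EB_succ {d : ℕ} (A : Matrix (Fin d) (Fin d) ℝ) (η ε : ℝ) (T : ℕ) :
    EB A η ε (T + 1) =
      ((Fintype.card (Fin d × Fin d) : ℝ))⁻¹ • ∑ p : Fin d × Fin d,
        (1 + η • sampleMat A p)ᵀ * EB A η ε T * (1 + η • sampleMat A p) := by
  unfold EB
  set M : Matrix (Fin d) (Fin d) ℝ := (1 - ε) • (1 : Matrix (Fin d) (Fin d) ℝ) - A with hM
  have key : ∀ (p : Fin d × Fin d) (ω' : Fin T → Fin d × Fin d),
      prodMat A η (T + 1) (Fin.cons p ω') = prodMat A η T ω' * (1 + η • sampleMat A p) := by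
    intro p ω'
    rw [prodMat_cons]
    simp only [Fin.cons_succ, Fin.cons_zero]
  rw [← Equiv.sum_comp (Fin.consEquiv (fun _ : Fin (T + 1) => Fin d × Fin d))
      (fun ω => (prodMat A η (T + 1) ω)ᵀ * M * prodMat A η (T + 1) ω)]
  rw [Fintype.sum_prod_type]
  have step : ∀ p : Fin d × Fin d,
      (∑ ω' : Fin T → Fin d × Fin d,
        (prodMat A η (T + 1) ((Fin.consEquiv (fun _ : Fin (T + 1) => Fin d × Fin d)) (p, ω')))ᵀ *
          M * prodMat A η (T + 1) ((Fin.consEquiv (fun _ : Fin (T + 1) => Fin d × Fin d)) (p, ω')))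
      = (1 + η • sampleMat A p)ᵀ *
          (∑ ω' : Fin T → Fin d × Fin d, (prodMat A η T ω')ᵀ * M * prodMat A η T ω') *
          (1 + η • sampleMat A p) := by
    intro p
    rw [Finset.mul_sum, Finset.sum_mul]
    refine Finset.sum_congr rfl fun ω' _ => ?_
    have hce : (Fin.consEquiv fun _ : Fin (T + 1) => Fin d × Fin d) (p, ω') = Fin.cons p ω' :=
      rfl
    rw [hce, key, Matrix.transpose_mul]
    simp only [mul_assoc]
  simp only [step]
  have card1 : (Fintype.card (Fin (T + 1) → Fin d × Fin d) : ℝ)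
      = (Fintype.card (Fin d × Fin d) : ℝ) * (Fintype.card (Fin T → Fin d × Fin d) : ℝ) := by
    simp [Fintype.card_fun, pow_succ, mul_comm]
  rw [card1, mul_inv]
  simp only [_root_.Matrix.mul_smul, Matrix.smul_mul]
  rw [← Finset.smul_sum, smul_smul]

/-- Diagonal entries of the sandwich `(1+ηS_p)ᵀ B (1+ηS_p)`. -/
lemma sandwich_diag {d : ℕ} (A B : Matrix (Fin d) (Fin d) ℝ) (η : ℝ) (p : Fin d × Fin d)
    (j : Fin d) :
    (((1 + η • sampleMat A p)ᵀ * B * (1 + η • sampleMat A p) : Matrix (Fin d) (Fin d) ℝ)) j j =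
      B j j + (if j = p.2 then
        η * ((d : ℝ) ^ 2 * A p.1 p.2) * (B j p.1 + B p.1 j) +
          (η * ((d : ℝ) ^ 2 * A p.1 p.2)) ^ 2 * B p.1 p.1 else 0) := by
  obtain ⟨i, k⟩ := p
  set c : ℝ := η * ((d : ℝ) ^ 2 * A i k) with hc
  have hS : η • sampleMat A (i, k) = c • Matrix.single i k (1 : ℝ) := by
    rw [sampleMat, smul_smul, hc]
  rw [hS]
  have hT : (1 + c • Matrix.single i k (1 : ℝ))ᵀ =
      1 + c • Matrix.single k i (1 : ℝ) := by
    rw [Matrix.transpose_add, Matrix.transpose_one, Matrix.transpose_smul,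
      stdBasisMatrix_transpose']
  rw [hT]
  have expand : (1 + c • Matrix.single k i (1 : ℝ)) * B *
      (1 + c • Matrix.single i k (1 : ℝ)) =
      B + c • (Matrix.single k i 1 * B) + c • (B * Matrix.single i k 1) +
        (c * c) • (Matrix.single k i 1 * B * Matrix.single i k 1) := by
    simp only [add_mul, mul_add, one_mul, mul_one, Matrix.smul_mul, Matrix.mul_smul, smul_smul]
    abel
  rw [expand]
  by_cases hjk : j = k
  · subst hjk
    simp only [Matrix.add_apply, Matrix.smul_apply, smul_eq_mul, eq_self_iff_true, if_true]
    rw [Matrix.single_mul_apply_same, Matrix.mul_single_apply_same,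
      Matrix.mul_single_apply_same, Matrix.single_mul_apply_same]
    ring
  · simp only [Matrix.add_apply, Matrix.smul_apply, smul_eq_mul, if_neg hjk]
    rw [Matrix.single_mul_apply_of_ne (h := hjk),
      Matrix.mul_single_apply_of_ne (hbj := hjk),
      Matrix.mul_single_apply_of_ne (hbj := hjk)]
    ring

/-- Formula for diagonal entries of `EB` at time `T+1`. -/
lemma EB_diag_succ {d : ℕ} (hd : 1 ≤ d) (A : Matrix (Fin d) (Fin d) ℝ) (η ε : ℝ) (T : ℕ)
    (j : Fin d) :
    EB A η ε (T + 1) j j =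
      EB A η ε T j j
        + η * ∑ i, A i j * (EB A η ε T j i + EB A η ε T i j)
        + η ^ 2 * (d : ℝ) ^ 2 * ∑ i, (A i j) ^ 2 * EB A η ε T i i := by
  have hd0 : (d : ℝ) ≠ 0 := by positivity
  rw [EB_succ]
  rw [Matrix.smul_apply, Matrix.sum_apply]
  simp only [sandwich_diag]
  rw [Fintype.sum_prod_type]
  simp only [Finset.sum_add_distrib, Finset.sum_ite_eq, Finset.mem_univ, if_true,
    Finset.sum_const, Finset.card_univ, Fintype.card_fin, nsmul_eq_mul, smul_eq_mul]
  have hsum1 : (∑ i : Fin d, η * ((d : ℝ) ^ 2 * A i j) * (EB A η ε T j i + EB A η ε T i j))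
      = (d : ℝ) ^ 2 * (η * ∑ i, A i j * (EB A η ε T j i + EB A η ε T i j)) := by
    rw [Finset.mul_sum, Finset.mul_sum]
    exact Finset.sum_congr rfl fun i _ => by ring
  have hsum2 : (∑ i : Fin d, (η * ((d : ℝ) ^ 2 * A i j)) ^ 2 * EB A η ε T i i)
      = (d : ℝ) ^ 4 * (η ^ 2 * ∑ i, (A i j) ^ 2 * EB A η ε T i i) := by
    rw [Finset.mul_sum, Finset.mul_sum]
    exact Finset.sum_congr rfl fun i _ => by ring
  rw [hsum1, hsum2]
  have hcard : (Fintype.card (Fin d × Fin d) : ℝ) = (d : ℝ) * (d : ℝ) := by simp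
  rw [hcard]
  field_simp
  ring

lemma toEuclideanCLM_apply' {d : ℕ} (M : Matrix (Fin d) (Fin d) ℝ)
    (x : EuclideanSpace ℝ (Fin d)) :
    Matrix.toEuclideanCLM (𝕜 := ℝ) M x =
      (WithLp.equiv 2 (Fin d → ℝ)).symm (M *ᵥ (WithLp.equiv 2 (Fin d → ℝ) x)) := by
  have h := Matrix.toEuclideanCLM_toLp (𝕜 := ℝ) M (WithLp.equiv 2 (Fin d → ℝ) x)
  simpa [Matrix.toLin'_apply] using h

lemma opNorm_diagonal_le {d : ℕ} (v : Fin d → ℝ) {C : ℝ} (hC : 0 ≤ C)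
    (h : ∀ j, |v j| ≤ C) : opNorm (Matrix.diagonal v) ≤ C := by
  refine ContinuousLinearMap.opNorm_le_bound _ hC fun x => ?_
  rw [toEuclideanCLM_apply', EuclideanSpace.norm_eq, EuclideanSpace.norm_eq]
  have hcoord : ∀ i : Fin d,
      ‖(WithLp.equiv 2 (Fin d → ℝ)).symm
        (Matrix.diagonal v *ᵥ (WithLp.equiv 2 (Fin d → ℝ) x)) i‖ ^ 2
        = (v i) ^ 2 * ‖x i‖ ^ 2 := by
    intro i
    rw [WithLp.equiv_symm_apply, PiLp.toLp_apply, Matrix.mulVec_diagonal]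
    simp [Real.norm_eq_abs, abs_mul, mul_pow, sq_abs]
  simp only [hcoord]
  have hCs : C * Real.sqrt (∑ i, ‖x i‖ ^ 2) = Real.sqrt (C ^ 2 * ∑ i, ‖x i‖ ^ 2) := by
    rw [Real.sqrt_mul (sq_nonneg C), Real.sqrt_sq hC]
  rw [hCs]
  apply Real.sqrt_le_sqrt
  rw [Finset.mul_sum]
  refine Finset.sum_le_sum fun i _ => ?_
  have : v i ^ 2 ≤ C ^ 2 := by
    rw [← sq_abs]
    exact pow_le_pow_left₀ (abs_nonneg _) (h i) 2
  exact mul_le_mul_of_nonneg_right this (sq_nonneg _)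

lemma abs_le_opNorm_diagonal {d : ℕ} (v : Fin d → ℝ) (j : Fin d) :
    |v j| ≤ opNorm (Matrix.diagonal v) := by
  have h := (Matrix.toEuclideanCLM (𝕜 := ℝ) (Matrix.diagonal v)).le_opNorm
    (EuclideanSpace.single j (1 : ℝ))
  have h2 : Matrix.toEuclideanCLM (𝕜 := ℝ) (Matrix.diagonal v) (EuclideanSpace.single j 1)
      = EuclideanSpace.single j (v j) := by
    rw [toEuclideanCLM_apply']
    have hv : Matrix.diagonal v *ᵥ (WithLp.equiv 2 (Fin d → ℝ)) (EuclideanSpace.single j (1 : ℝ))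
        = Pi.single j (v j) := by
      funext i
      rw [Matrix.mulVec_diagonal]
      rcases eq_or_ne i j with rfl | hij
      · simp [EuclideanSpace.single_apply, Pi.single_apply]
      · simp [EuclideanSpace.single_apply, Pi.single_apply, hij]
    rw [hv]
    rfl
  rw [h2, EuclideanSpace.norm_single, EuclideanSpace.norm_single, norm_one (α := ℝ),
    mul_one, Real.norm_eq_abs] at h
  exact h

lemma sqrt_col_le_colNorm {d : ℕ} (M : Matrix (Fin d) (Fin d) ℝ) (j : Fin d) :
    Real.sqrt (∑ i, (M i j) ^ 2) ≤ colNorm M :=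
  le_ciSup (f := fun j : Fin d => Real.sqrt (∑ i, (M i j) ^ 2))
    (Set.Finite.bddAbove (Set.finite_range _)) j

lemma colNorm_nonneg {d : ℕ} (hd : 1 ≤ d) (M : Matrix (Fin d) (Fin d) ℝ) : 0 ≤ colNorm M := by
  exact le_trans (Real.sqrt_nonneg _) (sqrt_col_le_colNorm M ⟨0, hd⟩)

theorem stmt4 {d : ℕ} (hd : 1 ≤ d) (A : Matrix (Fin d) (Fin d) ℝ) (hsymm : A.IsSymm)
    (hA : colNorm A ≤ 1) (η ε : ℝ) (hη : 0 < η) (T : ℕ) (hT : 1 ≤ T) :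
    opNorm (diagPart (EB A η ε T))
      ≤ 2 * η * colNorm (EB A η ε (T - 1))
        + (1 + η ^ 2 * (d : ℝ) ^ 2) * opNorm (diagPart (EB A η ε (T - 1))) := by
  obtain ⟨n, rfl⟩ : ∃ n, T = n + 1 := ⟨T - 1, by omega⟩
  simp only [Nat.add_sub_cancel]
  have hBsymm := EB_isSymm A hsymm η ε n
  have hcolB : 0 ≤ colNorm (EB A η ε n) := colNorm_nonneg hd _
  have hopB : (0 : ℝ) ≤ opNorm (diagPart (EB A η ε n)) := norm_nonneg _
  have hC : 0 ≤ 2 * η * colNorm (EB A η ε n)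
      + (1 + η ^ 2 * (d : ℝ) ^ 2) * opNorm (diagPart (EB A η ε n)) := by
    have h1 : (0 : ℝ) ≤ 1 + η ^ 2 * (d : ℝ) ^ 2 := by positivity
    have h2 := mul_nonneg (by positivity : (0 : ℝ) ≤ 2 * η) hcolB
    nlinarith [mul_nonneg h1 hopB]
  show opNorm (Matrix.diagonal (EB A η ε (n + 1)).diag) ≤ _
  refine opNorm_diagonal_le _ hC fun j => ?_
  show |EB A η ε (n + 1) j j| ≤ _
  rw [EB_diag_succ hd]
  have hmid : ∑ i, A i j * (EB A η ε n j i + EB A η ε n i j)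
      = 2 * ∑ i, A i j * EB A η ε n i j := by
    rw [Finset.mul_sum]
    refine Finset.sum_congr rfl fun i _ => ?_
    rw [hBsymm.apply i j]; ring
  rw [hmid]
  set S : ℝ := ∑ i, A i j * EB A η ε n i j with hS
  set Z : ℝ := ∑ i, (A i j) ^ 2 * EB A η ε n i i with hZdef
  have hAj : Real.sqrt (∑ i, (A i j) ^ 2) ≤ 1 := le_trans (sqrt_col_le_colNorm A j) hA
  have h0A : (0 : ℝ) ≤ ∑ i, (A i j) ^ 2 := Finset.sum_nonneg fun i _ => sq_nonneg _
  have hA2 : ∑ i, (A i j) ^ 2 ≤ 1 := by nlinarith [Real.sq_sqrt h0A, hAj, Real.sqrt_nonneg (∑ i, (A i j) ^ 2)]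
  have hCS : |S| ≤ colNorm (EB A η ε n) := by
    have h2 := Finset.sum_mul_sq_le_sq_mul_sq Finset.univ (fun i => A i j)
      (fun i => EB A η ε n i j)
    have hBj := sqrt_col_le_colNorm (EB A η ε n) j
    calc |S| = Real.sqrt (S ^ 2) := (Real.sqrt_sq_eq_abs _).symm
    _ ≤ Real.sqrt ((∑ i, (A i j) ^ 2) * ∑ i, (EB A η ε n i j) ^ 2) :=
        Real.sqrt_le_sqrt h2
    _ = Real.sqrt (∑ i, (A i j) ^ 2) * Real.sqrt (∑ i, (EB A η ε n i j) ^ 2) :=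
        Real.sqrt_mul h0A _
    _ ≤ 1 * colNorm (EB A η ε n) := mul_le_mul hAj hBj (Real.sqrt_nonneg _) zero_le_one
    _ = colNorm (EB A η ε n) := one_mul _
  have hdiag : ∀ i, |EB A η ε n i i| ≤ opNorm (diagPart (EB A η ε n)) := fun i =>
    abs_le_opNorm_diagonal (EB A η ε n).diag i
  have hZ : |Z| ≤ opNorm (diagPart (EB A η ε n)) := by
    calc |Z| ≤ ∑ i, |(A i j) ^ 2 * EB A η ε n i i| := Finset.abs_sum_le_sum_abs _ _
    _ = ∑ i, (A i j) ^ 2 * |EB A η ε n i i| := by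
        refine Finset.sum_congr rfl fun i _ => ?_
        rw [abs_mul, abs_of_nonneg (sq_nonneg _)]
    _ ≤ ∑ i, (A i j) ^ 2 * opNorm (diagPart (EB A η ε n)) :=
        Finset.sum_le_sum fun i _ => mul_le_mul_of_nonneg_left (hdiag i) (sq_nonneg _)
    _ = (∑ i, (A i j) ^ 2) * opNorm (diagPart (EB A η ε n)) := by rw [← Finset.sum_mul]
    _ ≤ 1 * opNorm (diagPart (EB A η ε n)) := mul_le_mul_of_nonneg_right hA2 hopB
    _ = opNorm (diagPart (EB A η ε n)) := one_mul _
  have hX : |EB A η ε n j j| ≤ opNorm (diagPart (EB A η ε n)) := hdiag j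
  have key : |EB A η ε n j j + η * (2 * S) + η ^ 2 * (d : ℝ) ^ 2 * Z|
      ≤ |EB A η ε n j j| + η * (2 * |S|) + η ^ 2 * (d : ℝ) ^ 2 * |Z| := by
    calc |EB A η ε n j j + η * (2 * S) + η ^ 2 * (d : ℝ) ^ 2 * Z|
        ≤ |EB A η ε n j j + η * (2 * S)| + |η ^ 2 * (d : ℝ) ^ 2 * Z| := abs_add_le _ _
    _ ≤ |EB A η ε n j j| + |η * (2 * S)| + |η ^ 2 * (d : ℝ) ^ 2 * Z| :=
        add_le_add_left (abs_add_le _ _) _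
    _ = |EB A η ε n j j| + η * (2 * |S|) + η ^ 2 * (d : ℝ) ^ 2 * |Z| := by
        simp only [abs_mul, abs_of_pos hη, abs_two, abs_of_nonneg (sq_nonneg (η : ℝ)),
          abs_of_nonneg (by positivity : (0 : ℝ) ≤ ((d : ℝ) ^ 2)), sq_abs]
  have hm1 : η * (2 * |S|) ≤ η * (2 * colNorm (EB A η ε n)) := by
    have := mul_le_mul_of_nonneg_left hCS (by positivity : (0 : ℝ) ≤ 2)
    exact mul_le_mul_of_nonneg_left this (le_of_lt hη)
  have hm2 : η ^ 2 * (d : ℝ) ^ 2 * |Z| ≤ η ^ 2 * (d : ℝ) ^ 2 * opNorm (diagPart (EB A η ε n)) :=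
    mul_le_mul_of_nonneg_left hZ (by positivity)
  calc |EB A η ε n j j + η * (2 * S) + η ^ 2 * (d : ℝ) ^ 2 * Z|
      ≤ |EB A η ε n j j| + η * (2 * |S|) + η ^ 2 * (d : ℝ) ^ 2 * |Z| := key
  _ ≤ 2 * η * colNorm (EB A η ε n)
      + (1 + η ^ 2 * (d : ℝ) ^ 2) * opNorm (diagPart (EB A η ε n)) := by
    nlinarith [hX, hm1, hm2]
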